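/- Let 𝔽 ∈ {ℝ, ℂ} and let {A_e : e ∈ E} be a finite family of nonzero linear subspaces of 𝔽^n. Let H be a codimension-one linear subspace of 𝔽^n that is regular with respect to {A_e}. Then dim span{A_e ∩ H : e ∈ E} = min{Σ_{i=1}^t (dim span{A_e : e ∈ F_i} − 1) : {F_1, …, F_t} is a partition of E into nonempty sets}. -/

import Mathlib

open Module Submodule Finset

section Aux
variable {𝔽 : Type*} [Field 𝔽] {V : Type*} [AddCommGroup V] [Module 𝔽 V]

/-- If `H` has codimension one and `U ⊄ H` then `dim (U ⊓ H) = dim U - 1`. -/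
lemma codim_one_inf [FiniteDimensional 𝔽 V] {H U : Submodule 𝔽 V}
    (hH : finrank 𝔽 H + 1 = finrank 𝔽 V) (hU : ¬ U ≤ H) :
    finrank 𝔽 ↥(U ⊓ H) + 1 = finrank 𝔽 U := by
  have hlt : H < U ⊔ H := by
    rcases lt_or_eq_of_le (le_sup_right : H ≤ U ⊔ H) with h | h
    · exact h
    · exact absurd (le_sup_left.trans h.ge) hU
  have htop : U ⊔ H = ⊤ := by
    apply Submodule.eq_top_of_finrank_eq
    have h1 : finrank 𝔽 H < finrank 𝔽 ↥(U ⊔ H) := Submodule.finrank_lt_finrank_of_lt hlt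
    have h2 : finrank 𝔽 ↥(U ⊔ H) ≤ finrank 𝔽 V := Submodule.finrank_le _
    omega
  have h3 := Submodule.finrank_sup_add_finrank_inf_eq U H
  rw [htop, finrank_top] at h3
  omega

lemma le_biSup' {α : Type*} (U : α → Submodule 𝔽 V) {S : Finset α} {e : α} (he : e ∈ S) :
    U e ≤ ⨆ x ∈ S, U x :=
  le_iSup₂ (f := fun x (_ : x ∈ S) => U x) e he

/-- Subadditivity of `finrank` over finite suprema. -/
lemma finrank_biSup_le [FiniteDimensional 𝔽 V] {α : Type*} (Q : Finset α)
    (U : α → Submodule 𝔽 V) :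
    finrank 𝔽 ↥(⨆ x ∈ Q, U x) ≤ ∑ x ∈ Q, finrank 𝔽 ↥(U x) := by
  classical
  induction Q using Finset.induction_on with
  | empty => simp
  | @insert a Q ha ih =>
    rw [Finset.iSup_insert, Finset.sum_insert ha]
    have h := Submodule.finrank_sup_add_finrank_inf_eq (U a) (⨆ x ∈ Q, U x)
    omega

/-- In a vector space over an infinite field, one can pick a vector of `B` avoiding
finitely many subspaces, none of which contains `B`. -/
lemma exists_avoid [Infinite 𝔽] (B : Submodule 𝔽 V) (Cs : Finset (Submodule 𝔽 V))
    (h : ∀ C ∈ Cs, ¬ B ≤ C) : ∃ v ∈ B, ∀ C ∈ Cs, v ∉ C := by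
  classical
  induction Cs using Finset.induction_on with
  | empty => exact ⟨0, B.zero_mem, by simp⟩
  | @insert C₀ Cs hC₀ ih =>
    obtain ⟨v, hvB, hv⟩ := ih (fun C hC => h C (Finset.mem_insert_of_mem hC))
    obtain ⟨w, hwB, hwC₀⟩ := SetLike.not_le_iff_exists.mp (h C₀ (Finset.mem_insert_self _ _))
    by_cases hvC₀ : v ∈ C₀
    swap
    · refine ⟨v, hvB, fun C hC => ?_⟩
      rcases Finset.mem_insert.mp hC with rfl | hC
      · exact hvC₀
      · exact hv C hC
    by_contra hcon
    push_neg at hcon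
    have hx : ∀ t : 𝔽, ∃ C ∈ insert C₀ Cs, v + t • w ∈ C := by
      intro t
      obtain ⟨C, hC, hmem⟩ := hcon (v + t • w) (B.add_mem hvB (B.smul_mem _ hwB))
      exact ⟨C, hC, hmem⟩
    choose Cf hCf hCmem using hx
    obtain ⟨t, t', htt', heq⟩ := Finite.exists_ne_map_eq_of_infinite
      (fun t => (⟨Cf t, hCf t⟩ : {C // C ∈ insert C₀ Cs}))
    have hCeq : Cf t = Cf t' := congrArg Subtype.val heq
    set C := Cf t with hC
    have hm1 : v + t • w ∈ C := hCmem t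
    have hm2 : v + t' • w ∈ C := hCeq ▸ hCmem t'
    have hw : w ∈ C := by
      have hsub : (t - t') • w ∈ C := by
        have := C.sub_mem hm1 hm2
        simpa [sub_smul] using this
      have := C.smul_mem (t - t')⁻¹ hsub
      rwa [inv_smul_smul₀ (sub_ne_zero.mpr htt')] at this
    have hvC : v ∈ C := by
      have := C.sub_mem hm1 (C.smul_mem t hw)
      simpa using this
    rcases Finset.mem_insert.mp (hCf t) with h0 | hmem
    · exact hwC₀ (h0 ▸ hw)
    · exact hv C hmem hvC

/-- A functional not vanishing at finitely many nonzero vectors. -/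
lemma exists_functional [FiniteDimensional 𝔽 V] [Infinite 𝔽] (s : Finset V)
    (h : ∀ x ∈ s, x ≠ 0) : ∃ ψ : V →ₗ[𝔽] 𝔽, ∀ x ∈ s, ψ x ≠ 0 := by
  classical
  have hproper : ∀ C ∈ s.image (fun x => LinearMap.ker (Module.Dual.eval 𝔽 V x)),
      ¬ (⊤ : Submodule 𝔽 (Module.Dual 𝔽 V)) ≤ C := by
    intro C hC
    obtain ⟨x, hx, rfl⟩ := Finset.mem_image.mp hC
    intro hle
    refine h x hx ?_
    rw [← Module.forall_dual_apply_eq_zero_iff 𝔽]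
    intro φ
    have := hle (Submodule.mem_top (x := φ))
    simpa [LinearMap.mem_ker] using this
  obtain ⟨ψ, -, hψ⟩ := exists_avoid _ _ hproper
  refine ⟨ψ, fun x hx => ?_⟩
  have := hψ _ (Finset.mem_image_of_mem _ hx)
  simpa [LinearMap.mem_ker] using this

end Aux

section Aux2
variable {𝔽 : Type*} [Field 𝔽] {V : Type*} [AddCommGroup V] [Module 𝔽 V]

lemma finrank_map_mkQ_of_mem [FiniteDimensional 𝔽 V] {v : V} (hv : v ≠ 0)
    {U : Submodule 𝔽 V} (hvU : v ∈ U) :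
    finrank 𝔽 ↥(U.map (span 𝔽 {v}).mkQ) + 1 = finrank 𝔽 U := by
  have hr := LinearMap.finrank_range_add_finrank_ker ((span 𝔽 {v}).mkQ.comp U.subtype)
  rw [LinearMap.range_comp, Submodule.range_subtype] at hr
  rw [LinearMap.ker_comp, Submodule.ker_mkQ] at hr
  have hle : span 𝔽 {v} ≤ U := (Submodule.span_singleton_le_iff_mem v U).mpr hvU
  have hker : finrank 𝔽 ↥(comap U.subtype (span 𝔽 {v})) = 1 := by
    rw [LinearEquiv.finrank_eq (Submodule.comapSubtypeEquivOfLe hle)]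
    exact finrank_span_singleton hv
  rw [hker] at hr
  exact hr

lemma finrank_map_mkQ_of_not_mem [FiniteDimensional 𝔽 V] {v : V}
    {U : Submodule 𝔽 V} (hvU : v ∉ U) :
    finrank 𝔽 ↥(U.map (span 𝔽 {v}).mkQ) = finrank 𝔽 U := by
  have hr := LinearMap.finrank_range_add_finrank_ker ((span 𝔽 {v}).mkQ.comp U.subtype)
  rw [LinearMap.range_comp, Submodule.range_subtype] at hr
  rw [LinearMap.ker_comp, Submodule.ker_mkQ] at hr
  have hker : comap U.subtype (span 𝔽 {v}) = ⊥ := by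
    rw [Submodule.eq_bot_iff]
    rintro ⟨x, hxU⟩ hx
    rw [Submodule.mem_comap] at hx
    obtain ⟨c, hc⟩ := Submodule.mem_span_singleton.mp hx
    rcases eq_or_ne c 0 with rfl | hc0
    · ext; simpa using hc.symm
    · exfalso
      apply hvU
      have hc' : c • v = x := hc
      have : v = c⁻¹ • x := by rw [← hc']; simp [smul_smul, inv_mul_cancel₀ hc0]
      rw [this]
      exact U.smul_mem _ hxU
  rw [hker, finrank_bot] at hr
  simpa using hr

end Aux2
universe u

section Rado
variable {𝔽 : Type*} [Field 𝔽] [Infinite 𝔽] {ι : Type*} [Fintype ι] [Nonempty ι] [DecidableEq ι]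

lemma rado_aux (N : ℕ) :
    ∀ (V : Type u) [AddCommGroup V] [Module 𝔽 V] [FiniteDimensional 𝔽 V]
      (A : ι → Submodule 𝔽 V) (k : ι → ℕ), (∑ e, k e) = N →
      (∀ S : Finset ι, S.Nonempty → (∑ e ∈ S, k e) + 1 ≤ finrank 𝔽 ↥(⨆ e ∈ S, A e)) →
      ∃ (s : Finset V) (g : V → ι), (∀ x ∈ s, x ∈ A (g x)) ∧
        (∀ e, (s.filter fun x => g x = e).card = k e) ∧
        (LinearIndependent 𝔽 (fun x : (s : Set V) => (x : V))) ∧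
        ∀ e, ¬ A e ≤ span 𝔽 (s : Set V) := by
  classical
  induction N with
  | zero =>
    intro V _ _ _ A k hsum hall
    have hk : ∀ e, k e = 0 := by
      intro e
      exact Finset.sum_eq_zero_iff.mp hsum e (Finset.mem_univ e)
    have hsingle : ∀ e : ι, (⨆ x ∈ ({e} : Finset ι), A x) = A e := fun e => by simp
    refine ⟨∅, fun _ => Classical.arbitrary ι, by simp, by simp [hk], ?_, ?_⟩
    · rw [Finset.coe_empty]; exact linearIndependent_empty 𝔽 V
    · intro e hle
      have h1 := hall {e} ⟨e, Finset.mem_singleton_self e⟩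
      rw [hsingle e, Finset.sum_singleton, hk e] at h1
      rw [Finset.coe_empty, Submodule.span_empty, le_bot_iff] at hle
      rw [hle, finrank_bot] at h1
      omega
  | succ N ih =>
    intro V _ _ _ A k hsum hall
    by_cases hex : ∃ e, 0 < k e
    swap
    · push_neg at hex
      simp only [Nat.le_zero] at hex
      rw [Finset.sum_eq_zero (fun e _ => hex e)] at hsum
      omega
    obtain ⟨estar, hkstar⟩ := hex
    -- tight spans to avoid
    set TS : Finset (Finset ι) := Finset.univ.powerset.filter
      (fun S => estar ∉ S ∧ S.Nonempty ∧ (∑ e ∈ S, k e) + 1 = finrank 𝔽 ↥(⨆ e ∈ S, A e))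
      with hTSdef
    have havoid : ∀ C ∈ insert ⊥ (TS.image (fun S => ⨆ e ∈ S, A e)), ¬ A estar ≤ C := by
      intro C hC
      rcases Finset.mem_insert.mp hC with rfl | hC
      · intro hle
        have h1 := hall {estar} ⟨estar, Finset.mem_singleton_self _⟩
        have hsingle : (⨆ x ∈ ({estar} : Finset ι), A x) = A estar := by simp
        rw [hsingle, Finset.sum_singleton] at h1
        rw [le_bot_iff.mp hle, finrank_bot] at h1
        omega
      · obtain ⟨S, hS, rfl⟩ := Finset.mem_image.mp hC
        obtain ⟨hnotin, hSne, htight⟩ := (Finset.mem_filter.mp hS).2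
        intro hle
        have hsub : (⨆ e ∈ insert estar S, A e) = ⨆ e ∈ S, A e := by
          rw [Finset.iSup_insert]
          exact sup_eq_right.mpr hle
        have h2 := hall (insert estar S) ⟨estar, Finset.mem_insert_self _ _⟩
        rw [hsub, Finset.sum_insert hnotin] at h2
        omega
    obtain ⟨v, hvA, hvavoid⟩ := exists_avoid (A estar) _ havoid
    have hv0 : v ≠ 0 := by
      have := hvavoid ⊥ (Finset.mem_insert_self _ _)
      simpa using this
    set π := (span 𝔽 {v}).mkQ with hπdef
    set A' : ι → Submodule 𝔽 (V ⧸ span 𝔽 {v}) := fun e => (A e).map π with hA'def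
    set k' : ι → ℕ := Function.update k estar (k estar - 1) with hk'def
    have hsum_mem : ∀ (T : Finset ι), estar ∈ T → ∑ e ∈ T, k e = (∑ e ∈ T, k' e) + 1 := by
      intro T he
      rw [hk'def, Finset.sum_update_of_mem he,
        Finset.sum_eq_sum_sdiff_singleton_add he k]
      omega
    have hsum_not : ∀ (T : Finset ι), estar ∉ T → ∑ e ∈ T, k' e = ∑ e ∈ T, k e := by
      intro T he
      exact Finset.sum_congr rfl fun e heT =>
        Function.update_of_ne (ne_of_mem_of_not_mem heT he) _ _
    have hsum' : ∑ e, k' e = N := by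
      have := hsum_mem Finset.univ (Finset.mem_univ estar)
      omega
    have hmap : ∀ T : Finset ι,
        Submodule.map π (⨆ e ∈ T, A e) = ⨆ e ∈ T, A' e := by
      intro T
      rw [Submodule.map_iSup]
      exact iSup_congr fun e => Submodule.map_iSup _ _
    have hall' : ∀ S : Finset ι, S.Nonempty →
        (∑ e ∈ S, k' e) + 1 ≤ finrank 𝔽 ↥(⨆ e ∈ S, A' e) := by
      intro S hSne
      rw [← hmap]
      by_cases heS : estar ∈ S
      · have hvmem : v ∈ (⨆ e ∈ S, A e) :=
          (le_iSup₂ (f := fun e (_ : e ∈ S) => A e) estar heS) hvA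
        have hfr := finrank_map_mkQ_of_mem hv0 hvmem
        rw [← hπdef] at hfr
        have h1 := hall S hSne
        have h2 := hsum_mem S heS
        omega
      · rw [hsum_not S heS]
        by_cases htight : (∑ e ∈ S, k e) + 1 = finrank 𝔽 ↥(⨆ e ∈ S, A e)
        · -- tight: v avoids the span
          have hSmem : S ∈ TS := by
            rw [hTSdef]
            exact Finset.mem_filter.mpr ⟨Finset.mem_powerset.mpr (Finset.subset_univ S),
              heS, hSne, htight⟩
          have hvnot : v ∉ (⨆ e ∈ S, A e) :=
            hvavoid _ (Finset.mem_insert_of_mem (Finset.mem_image_of_mem _ hSmem))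
          have hfr := finrank_map_mkQ_of_not_mem hvnot
          rw [← hπdef] at hfr
          rw [hfr]
          exact hall S hSne
        · have h1 := hall S hSne
          have hstrict : (∑ e ∈ S, k e) + 2 ≤ finrank 𝔽 ↥(⨆ e ∈ S, A e) := by omega
          by_cases hv : v ∈ (⨆ e ∈ S, A e)
          · have hfr := finrank_map_mkQ_of_mem hv0 hv
            rw [← hπdef] at hfr
            omega
          · have hfr := finrank_map_mkQ_of_not_mem hv
            rw [← hπdef] at hfr
            omega
    obtain ⟨s', g', hmem', hcard', hind', hnle'⟩ :=
      ih (V ⧸ span 𝔽 {v}) A' k' hsum' hall'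
    -- lift the vectors
    have hlift : ∀ x' : {x // x ∈ s'}, ∃ y : V, y ∈ A (g' x'.1) ∧ π y = x'.1 := by
      intro x'
      have hx := hmem' x'.1 x'.2
      rw [hA'def] at hx
      obtain ⟨y, hy, hyx⟩ := Submodule.mem_map.mp hx
      exact ⟨y, hy, hyx⟩
    choose u hu hπu using hlift
    have huinj : Function.Injective u := by
      intro a b hab
      apply Subtype.ext
      rw [← hπu a, ← hπu b, hab]
    set tset : Finset V := s'.attach.image u with htsetdef
    have htmem : ∀ x ∈ tset, ∃ a : {z // z ∈ s'}, u a = x := by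
      intro x hx
      obtain ⟨a, -, h⟩ := Finset.mem_image.mp hx
      exact ⟨a, h⟩
    have hπtset : ∀ x ∈ tset, π x ∈ s' := by
      intro x hx
      obtain ⟨a, rfl⟩ := htmem x hx
      rw [hπu]
      exact a.2
    have hπinj : ∀ x ∈ tset, ∀ y ∈ tset, π x = π y → x = y := by
      intro x hx y hy hxy
      obtain ⟨a, rfl⟩ := htmem x hx
      obtain ⟨b, rfl⟩ := htmem y hy
      rw [hπu, hπu] at hxy
      exact congrArg u (Subtype.ext hxy)
    have hπv : π v = 0 := by
      rw [hπdef, Submodule.mkQ_apply, Submodule.Quotient.mk_eq_zero]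
      exact Submodule.mem_span_singleton_self v
    have hvt : v ∉ tset := by
      intro hvt
      have h0s : (0 : V ⧸ span 𝔽 {v}) ∈ s' := by
        rw [← hπv]
        exact hπtset v hvt
      exact (hind'.ne_zero ⟨0, by exact_mod_cast h0s⟩) rfl
    have hindt : LinearIndependent 𝔽 (fun x : (tset : Set V) => (x : V)) := by
      have heinj : Function.Injective (fun x : (tset : Set V) =>
          (⟨π x.1, by exact_mod_cast hπtset x.1 (by exact_mod_cast x.2)⟩ :
            (s' : Set (V ⧸ span 𝔽 {v})))) := by
        intro x y hxy
        exact Subtype.ext (hπinj x.1 (by exact_mod_cast x.2) y.1 (by exact_mod_cast y.2)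
          (congrArg Subtype.val hxy))
      exact LinearIndependent.of_comp π (hind'.comp _ heinj)
    have himgtset : π '' (tset : Set V) = (s' : Set (V ⧸ span 𝔽 {v})) := by
      ext y
      constructor
      · rintro ⟨x, hx, rfl⟩
        exact_mod_cast hπtset x (by exact_mod_cast hx)
      · intro hy
        exact ⟨u ⟨y, by exact_mod_cast hy⟩, by
          constructor
          · exact_mod_cast Finset.mem_image_of_mem u (Finset.mem_attach _ _)
          · rw [hπu]⟩
    have hcardt : tset.card = s'.card := by
      rw [htsetdef, Finset.card_image_of_injective _ huinj, Finset.card_attach]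
    have hvspan : v ∉ span 𝔽 (tset : Set V) := by
      intro hvs
      have h3 := finrank_map_mkQ_of_mem hv0 hvs
      rw [Submodule.map_span, himgtset] at h3
      rw [finrank_span_finset_eq_card hind', finrank_span_finset_eq_card hindt, hcardt] at h3
      omega
    refine ⟨insert v tset, fun x => if x ∈ tset then g' (π x) else estar, ?_, ?_, ?_, ?_⟩
    · intro x hx
      rcases Finset.mem_insert.mp hx with rfl | hx
      · simp only [if_neg hvt]
        exact hvA
      · simp only [if_pos hx]
        obtain ⟨a, rfl⟩ := htmem x hx
        rw [hπu]
        exact hu a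
    · intro e
      have hinner : (tset.filter fun x => (if x ∈ tset then g' (π x) else estar) = e).card
          = (s'.filter fun y => g' y = e).card := by
        refine Finset.card_bij (fun x _ => π x) ?_ ?_ ?_
        · intro x hx
          have hx1 := Finset.mem_filter.mp hx
          refine Finset.mem_filter.mpr ⟨hπtset x hx1.1, ?_⟩
          have := hx1.2
          rwa [if_pos hx1.1] at this
        · intro x hx y hy hxy
          exact hπinj x (Finset.mem_filter.mp hx).1 y (Finset.mem_filter.mp hy).1 hxy
        · intro y hy
          have hy1 := Finset.mem_filter.mp hy
          have hut : u ⟨y, hy1.1⟩ ∈ tset :=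
            Finset.mem_image_of_mem u (Finset.mem_attach _ _)
          refine ⟨u ⟨y, hy1.1⟩, ?_, ?_⟩
          · refine Finset.mem_filter.mpr ⟨hut, ?_⟩
            rw [if_pos hut, hπu]
            exact hy1.2
          · show π (u ⟨y, hy1.1⟩) = y
            exact hπu _
      rw [Finset.filter_insert]
      by_cases he : e = estar
      · subst he
        rw [if_pos (show (fun x => if x ∈ tset then g' (π x) else e) v = e by
          simp only [if_neg hvt])]
        rw [Finset.card_insert_of_notMem (fun h => hvt (Finset.mem_of_mem_filter _ h))]
        rw [hinner, hcard']
        rw [hk'def, Function.update_self]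
        omega
      · rw [if_neg (show ¬(fun x => if x ∈ tset then g' (π x) else estar) v = e by
          simp only [if_neg hvt]; exact fun h => he h.symm)]
        rw [hinner, hcard', hk'def, Function.update_of_ne (fun h => he h) _ _]
    · have hcoe : ((insert v tset : Finset V) : Set V) = insert v (tset : Set V) := by
        simp
      rw [hcoe]
      exact (linearIndepOn_id_insert (by exact_mod_cast hvt)).mpr ⟨hindt, hvspan⟩
    · intro e hle
      apply hnle' e
      have hmono : Submodule.map π (A e) ≤
          Submodule.map π (span 𝔽 ((insert v tset : Finset V) : Set V)) :=
        Submodule.map_mono hle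
      rw [Submodule.map_span] at hmono
      have himg : π '' ((insert v tset : Finset V) : Set V)
          = insert (0 : V ⧸ span 𝔽 {v}) (s' : Set (V ⧸ span 𝔽 {v})) := by
        rw [Finset.coe_insert, Set.image_insert_eq, hπv, himgtset]
      rw [himg, Submodule.span_insert_zero] at hmono
      exact hmono

end Rado
/-- `P` is a partition of the finite set `F` into nonempty parts. -/
def IsPartitionOf {α : Type*} [DecidableEq α] (P : Finset (Finset α)) (F : Finset α) : Prop :=
  (∀ S ∈ P, S.Nonempty) ∧ (∀ S ∈ P, ∀ T ∈ P, S ≠ T → Disjoint S T) ∧ P.sup id = F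

/-- `H` is a codimension-one subspace of `𝔽ⁿ`. -/
def IsCodimOne {𝔽 : Type*} [Field 𝔽] {n : ℕ} (H : Submodule 𝔽 (Fin n → 𝔽)) : Prop :=
  Module.finrank 𝔽 H + 1 = n

/-- `H` intersects the family `A` transversally: `dim (A_e ⊓ H) = dim A_e − 1` for all `e`. -/
def Transversal {𝔽 : Type*} [Field 𝔽] {n : ℕ} {ι : Type*}
    (A : ι → Submodule 𝔽 (Fin n → 𝔽)) (H : Submodule 𝔽 (Fin n → 𝔽)) : Prop :=
  ∀ e : ι, Module.finrank 𝔽 ↥(A e ⊓ H) + 1 = Module.finrank 𝔽 (A e)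

/-- `H` is regular with respect to the family `A`: it is transversal, and for every
`F ⊆ E` it maximizes `dim ⟨A_e ∩ H : e ∈ F⟩` among all transversal codimension-one
subspaces. -/
def RegularWrt {𝔽 : Type*} [Field 𝔽] {n : ℕ} {ι : Type*} [Fintype ι] [DecidableEq ι]
    (A : ι → Submodule 𝔽 (Fin n → 𝔽)) (H : Submodule 𝔽 (Fin n → 𝔽)) : Prop :=
  IsCodimOne H ∧ Transversal A H ∧
    ∀ F : Finset ι, ∀ H' : Submodule 𝔽 (Fin n → 𝔽), IsCodimOne H' → Transversal A H' →
      Module.finrank 𝔽 ↥(⨆ e ∈ F, (A e ⊓ H')) ≤ Module.finrank 𝔽 ↥(⨆ e ∈ F, (A e ⊓ H))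

/-- For `𝔽 ∈ {ℝ, ℂ}`, a finite family of nonzero subspaces `A_e ⊆ 𝔽ⁿ`
and a codimension-one subspace `H` regular with respect to the family,
`dim ⟨A_e ∩ H : e ∈ E⟩ = min {∑ᵢ (dim ⟨A_e : e ∈ Fᵢ⟩ − 1) : {F₁,…,Fₜ} a partition of E}`. -/
theorem stmt5 {𝔽 : Type*} [RCLike 𝔽] {n : ℕ} {ι : Type*} [Fintype ι] [DecidableEq ι]
    (A : ι → Submodule 𝔽 (Fin n → 𝔽)) (hA : ∀ e, A e ≠ ⊥)
    (H : Submodule 𝔽 (Fin n → 𝔽)) (hH : RegularWrt A H) :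
    (Module.finrank 𝔽 ↥(⨆ e : ι, (A e ⊓ H)) : ℤ) =
      sInf {s : ℤ | ∃ Q : Finset (Finset ι), IsPartitionOf Q Finset.univ ∧
        s = ∑ S ∈ Q, ((Module.finrank 𝔽 ↥(⨆ e ∈ S, A e) : ℤ) - 1)} := by
  classical
  obtain ⟨hc, ht, hreg⟩ := hH
  haveI : Infinite 𝔽 := Infinite.of_injective (fun m : ℕ => (m : 𝔽)) Nat.cast_injective
  rcases isEmpty_or_nonempty ι with hempty | hne
  · haveI := hempty
    have h1 : (⨆ e : ι, (A e ⊓ H)) = ⊥ := by rw [iSup_of_empty]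
    have h2 : {s : ℤ | ∃ Q : Finset (Finset ι), IsPartitionOf Q Finset.univ ∧
        s = ∑ S ∈ Q, ((finrank 𝔽 ↥(⨆ e ∈ S, A e) : ℤ) - 1)} = {0} := by
      ext z
      simp only [Set.mem_setOf_eq, Set.mem_singleton_iff]
      constructor
      · rintro ⟨Q, ⟨hQne, hQdis, hQsup⟩, rfl⟩
        have hQ : Q = ∅ := by
          rw [Finset.eq_empty_iff_forall_notMem]
          intro S hS
          obtain ⟨x, hx⟩ := hQne S hS
          exact (IsEmpty.false x).elim
        rw [hQ]; simp
      · rintro rfl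
        exact ⟨∅, ⟨by simp, by simp, by simp [Finset.univ_eq_empty]⟩, by simp⟩
    rw [h1, h2, csInf_singleton]
    simp
  · have hV : finrank 𝔽 (Fin n → 𝔽) = n := by simp
    have hnotleH : ∀ e, ¬ A e ≤ H := by
      intro e hle
      have h1 := ht e
      rw [inf_eq_left.mpr hle] at h1
      omega
    set f : Finset ι → ℕ := fun S => finrank 𝔽 ↥(⨆ e ∈ S, A e) with hfdef
    have hfpos : ∀ S : Finset ι, S.Nonempty → 1 ≤ f S := by
      rintro S ⟨e, he⟩
      obtain ⟨x, hx, hx0⟩ := Submodule.ne_bot_iff (A e) |>.mp (hA e)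
      have h1 : span 𝔽 {x} ≤ ⨆ e' ∈ S, A e' :=
        (Submodule.span_singleton_le_iff_mem _ _).mpr
          ((le_biSup' A he) hx)
      have h2 := Submodule.finrank_mono h1
      rw [finrank_span_singleton hx0] at h2
      simpa only [hfdef] using h2
    set M : Set ℕ := {m | ∃ k : ι → ℕ,
      (∀ S : Finset ι, S.Nonempty → (∑ e ∈ S, k e) + 1 ≤ f S) ∧ ∑ e, k e = m} with hMdef
    have hMne : M.Nonempty := ⟨0, fun _ => 0, fun S hS => by simpa using hfpos S hS, by simp⟩
    have hMbdd : BddAbove M := by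
      refine ⟨f Finset.univ, ?_⟩
      rintro m ⟨k, hk, rfl⟩
      have := hk Finset.univ Finset.univ_nonempty
      omega
    obtain ⟨k, hkF, hksum⟩ := Nat.sSup_mem hMne hMbdd
    have hkmax : ∀ k' : ι → ℕ,
        (∀ S : Finset ι, S.Nonempty → (∑ e ∈ S, k' e) + 1 ≤ f S) →
        ∑ e, k' e ≤ ∑ e, k e := by
      intro k' h
      rw [hksum]
      exact le_csSup hMbdd ⟨k', h, rfl⟩
    set Tight : Finset ι → Prop := fun S => S.Nonempty ∧ (∑ e ∈ S, k e) + 1 = f S with hTdef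
    have htight_ex : ∀ e, ∃ S, Tight S ∧ e ∈ S := by
      intro e
      by_contra hcon
      push_neg at hcon
      have hFeas' : ∀ S : Finset ι, S.Nonempty →
          (∑ x ∈ S, Function.update k e (k e + 1) x) + 1 ≤ f S := by
        intro S hS
        by_cases heS : e ∈ S
        · have hne2 : (∑ x ∈ S, k x) + 1 ≠ f S := by
            intro h
            exact hcon S ⟨hS, h⟩ heS
          have hle2 := hkF S hS
          have hupd : ∑ x ∈ S, Function.update k e (k e + 1) x
              = (∑ x ∈ S \ {e}, k x) + (k e + 1) := by
            rw [Finset.sum_update_of_mem heS]; omega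
          have horig : ∑ x ∈ S, k x = (∑ x ∈ S \ {e}, k x) + k e := by
            rw [Finset.sum_eq_sum_sdiff_singleton_add heS k]
          omega
        · have heq : ∑ x ∈ S, Function.update k e (k e + 1) x = ∑ x ∈ S, k x :=
            Finset.sum_congr rfl fun x hx =>
              Function.update_of_ne (ne_of_mem_of_not_mem hx heS) _ _
          rw [heq]
          exact hkF S hS
      have hgt := hkmax _ hFeas'
      rw [Finset.sum_update_of_mem (Finset.mem_univ e)] at hgt
      have horig : ∑ x ∈ Finset.univ, k x = (∑ x ∈ Finset.univ \ {e}, k x) + k e :=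
        Finset.sum_eq_sum_sdiff_singleton_add (Finset.mem_univ e) k
      omega
    have htunion : ∀ S T, Tight S → Tight T → (S ∩ T).Nonempty → Tight (S ∪ T) := by
      rintro S T ⟨hSne, hSt⟩ ⟨hTne, hTt⟩ hST
      have hsupeq : (⨆ e ∈ S ∪ T, A e) = (⨆ e ∈ S, A e) ⊔ (⨆ e ∈ T, A e) := by
        apply le_antisymm
        · refine iSup₂_le fun e he => ?_
          rcases Finset.mem_union.mp he with h | h
          · exact le_sup_of_le_left (le_biSup' A h)
          · exact le_sup_of_le_right (le_biSup' A h)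
        · exact sup_le (iSup₂_le fun e he => le_biSup' A (Finset.mem_union_left _ he))
            (iSup₂_le fun e he => le_biSup' A (Finset.mem_union_right _ he))
      have hrk := Submodule.finrank_sup_add_finrank_inf_eq (⨆ e ∈ S, A e) (⨆ e ∈ T, A e)
      have hint : f (S ∩ T) ≤ finrank 𝔽 ↥((⨆ e ∈ S, A e) ⊓ (⨆ e ∈ T, A e)) := by
        have hle : (⨆ e ∈ S ∩ T, A e) ≤ (⨆ e ∈ S, A e) ⊓ (⨆ e ∈ T, A e) :=
          iSup₂_le fun e he => le_inf (le_biSup' A (Finset.mem_inter.mp he).1)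
            (le_biSup' A (Finset.mem_inter.mp he).2)
        simpa only [hfdef] using Submodule.finrank_mono hle
      obtain ⟨x0, hx0⟩ := hST
      have hx0S : x0 ∈ S := (Finset.mem_inter.mp hx0).1
      have h1 := hkF (S ∩ T) ⟨x0, hx0⟩
      have h2 := hkF (S ∪ T) ⟨x0, Finset.mem_union_left _ hx0S⟩
      have hsum2 := Finset.sum_union_inter (s₁ := S) (s₂ := T) (f := k)
      have hfS : f S = finrank 𝔽 ↥(⨆ e ∈ S, A e) := by rw [hfdef]
      have hfT : f T = finrank 𝔽 ↥(⨆ e ∈ T, A e) := by rw [hfdef]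
      have hfU : f (S ∪ T) = finrank 𝔽 ↥((⨆ e ∈ S, A e) ⊔ (⨆ e ∈ T, A e)) := by
        simp only [hfdef]
        exact congrArg (fun X : Submodule 𝔽 (Fin n → 𝔽) => finrank 𝔽 ↥X) hsupeq
      refine ⟨⟨x0, Finset.mem_union_left _ hx0S⟩, ?_⟩
      omega
    set Usets : ι → Finset ι := fun e =>
      (Finset.univ.powerset.filter (fun S => Tight S ∧ e ∈ S)).sup id with hUdef
    have hUkey : ∀ e, Tight (Usets e) ∧ e ∈ Usets e := by
      intro e
      obtain ⟨S₀, hS₀t, hS₀e⟩ := htight_ex e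
      have key : ∀ 𝒯 : Finset (Finset ι), (∀ S ∈ 𝒯, Tight S ∧ e ∈ S) → 𝒯.Nonempty →
          Tight (𝒯.sup id) ∧ e ∈ 𝒯.sup id := by
        intro 𝒯
        induction 𝒯 using Finset.induction_on with
        | empty => rintro _ ⟨S, hS⟩; simp at hS
        | @insert S 𝒯 hS ihT =>
          intro hallT _
          have hSprop := hallT S (Finset.mem_insert_self _ _)
          rcases 𝒯.eq_empty_or_nonempty with rfl | h𝒯
          · rw [Finset.sup_insert, Finset.sup_empty]
            simpa using hSprop
          · obtain ⟨hTt, hTe⟩ := ihT (fun S' h => hallT S' (Finset.mem_insert_of_mem h)) h𝒯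
            rw [Finset.sup_insert]
            have hun : (id S ⊔ 𝒯.sup id) = S ∪ 𝒯.sup id := by
              simp [Finset.sup_eq_union]
            rw [hun]
            exact ⟨htunion _ _ hSprop.1 hTt ⟨e, Finset.mem_inter.mpr ⟨hSprop.2, hTe⟩⟩,
              Finset.mem_union_left _ hSprop.2⟩
      simp only [hUdef]
      refine key (Finset.univ.powerset.filter (fun S => Tight S ∧ e ∈ S))
        (fun S hS => (Finset.mem_filter.mp hS).2) ?_
      exact ⟨S₀, Finset.mem_filter.mpr ⟨Finset.mem_powerset.mpr (Finset.subset_univ _), hS₀t, hS₀e⟩⟩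
    have hUmax : ∀ e S, Tight S → e ∈ S → S ⊆ Usets e := by
      intro e S hSt heS
      simp only [hUdef]
      refine Finset.le_sup (s := Finset.univ.powerset.filter (fun S => Tight S ∧ e ∈ S))
        (f := id) ?_
      exact Finset.mem_filter.mpr ⟨Finset.mem_powerset.mpr (Finset.subset_univ _), hSt, heS⟩
    set P : Finset (Finset ι) := Finset.univ.image Usets with hPdef
    have hPart : IsPartitionOf P Finset.univ := by
      refine ⟨?_, ?_, ?_⟩
      · intro S hS
        obtain ⟨e, -, rfl⟩ := Finset.mem_image.mp hS
        exact ⟨e, (hUkey e).2⟩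
      · intro S hS T hT hST
        obtain ⟨a, -, rfl⟩ := Finset.mem_image.mp hS
        obtain ⟨b, -, rfl⟩ := Finset.mem_image.mp hT
        rw [Finset.disjoint_left]
        intro x hxa hxb
        apply hST
        have hUn : Tight (Usets a ∪ Usets b) :=
          htunion _ _ (hUkey a).1 (hUkey b).1 ⟨x, Finset.mem_inter.mpr ⟨hxa, hxb⟩⟩
        have h1 : Usets a ∪ Usets b ⊆ Usets a :=
          hUmax a _ hUn (Finset.mem_union_left _ (hUkey a).2)
        have h2 : Usets a ∪ Usets b ⊆ Usets b :=
          hUmax b _ hUn (Finset.mem_union_right _ (hUkey b).2)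
        exact Finset.Subset.antisymm (Finset.subset_union_left.trans h2)
          (Finset.subset_union_right.trans h1)
      · apply Finset.Subset.antisymm
        · intro x _
          exact Finset.mem_univ x
        · intro e _
          exact Finset.mem_sup.mpr ⟨Usets e, Finset.mem_image_of_mem _ (Finset.mem_univ e),
            (hUkey e).2⟩
    have hsum_part : ∀ (Q : Finset (Finset ι)), IsPartitionOf Q Finset.univ →
        ∀ (w : ι → ℕ), ∑ S ∈ Q, ∑ e ∈ S, w e = ∑ e, w e := by
      rintro Q ⟨hQne, hQdis, hQsup⟩ w
      have hdisj : (↑Q : Set (Finset ι)).PairwiseDisjoint id := by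
        intro S hS T hT hST
        exact hQdis S hS T hT hST
      have hbi : Q.biUnion id = Finset.univ := by rw [← Finset.sup_eq_biUnion, hQsup]
      rw [← hbi]
      exact (Finset.sum_biUnion hdisj).symm
    -- weak duality
    have hwd : finrank 𝔽 ↥(⨆ e ∈ (Finset.univ : Finset ι), (A e ⊓ H)) ≤ ∑ e, k e := by
      have hre : (⨆ e ∈ (Finset.univ : Finset ι), (A e ⊓ H))
          = ⨆ S ∈ P, ⨆ e ∈ S, (A e ⊓ H) := by
        apply le_antisymm
        · refine iSup₂_le fun e _ => ?_
          have heP : e ∈ P.sup id := by rw [hPart.2.2]; exact Finset.mem_univ e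
          obtain ⟨S, hSP, heS⟩ := Finset.mem_sup.mp heP
          exact le_trans (le_biSup' (fun x => A x ⊓ H) (show e ∈ S from heS))
            (le_biSup' (fun S => ⨆ e ∈ S, (A e ⊓ H)) hSP)
        · exact iSup₂_le fun S hS => iSup₂_le fun e he =>
            le_biSup' (fun x => A x ⊓ H) (Finset.mem_univ e)
      rw [congrArg (fun X : Submodule 𝔽 (Fin n → 𝔽) => finrank 𝔽 ↥X) hre]
      calc finrank 𝔽 ↥(⨆ S ∈ P, ⨆ e ∈ S, (A e ⊓ H))
          ≤ ∑ S ∈ P, finrank 𝔽 ↥(⨆ e ∈ S, (A e ⊓ H)) := finrank_biSup_le P _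
        _ ≤ ∑ S ∈ P, ∑ e ∈ S, k e := by
            refine Finset.sum_le_sum fun S hS => ?_
            obtain ⟨a, -, rfl⟩ := Finset.mem_image.mp (show S ∈ Finset.univ.image Usets from hS)
            obtain ⟨hSne, hteq⟩ := (hUkey a).1
            have hsub : (⨆ e ∈ Usets a, (A e ⊓ H)) ≤ (⨆ e ∈ Usets a, A e) ⊓ H :=
              le_inf (iSup₂_le fun e he => le_trans inf_le_left (le_biSup' A he))
                (iSup₂_le fun e he => inf_le_right)
            have hnle : ¬ (⨆ e ∈ Usets a, A e) ≤ H := by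
              obtain ⟨e₀, he₀⟩ := hSne
              exact fun hle => hnotleH e₀ (le_trans (le_biSup' A he₀) hle)
            have hci := codim_one_inf (H := H) (U := ⨆ e ∈ Usets a, A e)
              (by rw [hV]; exact hc) hnle
            have hmono := Submodule.finrank_mono hsub
            have hfS : f (Usets a) = finrank 𝔽 ↥(⨆ e ∈ Usets a, A e) := by rw [hfdef]
            omega
        _ = ∑ e, k e := hsum_part P hPart k
    -- construction of a good transversal hyperplane
    have hallA : ∀ S : Finset ι, S.Nonempty →
        (∑ e ∈ S, k e) + 1 ≤ finrank 𝔽 ↥(⨆ e ∈ S, A e) := by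
      intro S hS
      have := hkF S hS
      simpa only [hfdef] using this
    obtain ⟨s, g, hmem, hcard, hind, hnle⟩ :=
      rado_aux (𝔽 := 𝔽) (∑ e, k e) (Fin n → 𝔽) A k rfl hallA
    set W := span 𝔽 ((s : Set (Fin n → 𝔽))) with hWdef
    have hWrank : finrank 𝔽 ↥W = ∑ e, k e := by
      rw [hWdef, finrank_span_finset_eq_card hind]
      rw [Finset.card_eq_sum_card_fiberwise (fun x _ => Finset.mem_univ (g x))]
      exact Finset.sum_congr rfl fun e _ => hcard e
    choose a haA haW using fun e => SetLike.not_le_iff_exists.mp (hnle e)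
    have hq0 : ∀ x ∈ Finset.univ.image (fun e => W.mkQ (a e)), x ≠ (0 : (Fin n → 𝔽) ⧸ W) := by
      intro x hx
      obtain ⟨e, -, rfl⟩ := Finset.mem_image.mp hx
      intro h0
      rw [Submodule.mkQ_apply, Submodule.Quotient.mk_eq_zero] at h0
      exact haW e h0
    obtain ⟨ψ, hψ⟩ := exists_functional (𝔽 := 𝔽) (Finset.univ.image (fun e => W.mkQ (a e))) hq0
    have hφa : ∀ e, (ψ.comp W.mkQ) (a e) ≠ 0 :=
      fun e => hψ _ (Finset.mem_image_of_mem _ (Finset.mem_univ e))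
    have hWker : W ≤ LinearMap.ker (ψ.comp W.mkQ) := by
      intro x hx
      rw [LinearMap.mem_ker, LinearMap.comp_apply, Submodule.mkQ_apply,
        (Submodule.Quotient.mk_eq_zero W).mpr hx, map_zero]
    have hcodim' : IsCodimOne (LinearMap.ker (ψ.comp W.mkQ)) := by
      have hr := LinearMap.finrank_range_add_finrank_ker (ψ.comp W.mkQ)
      have hsurj : Function.Surjective (ψ.comp W.mkQ) := by
        intro c
        obtain ⟨e₀⟩ := hne
        refine ⟨(c / (ψ.comp W.mkQ) (a e₀)) • a e₀, ?_⟩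
        rw [map_smul, smul_eq_mul, div_mul_cancel₀ _ (hφa e₀)]
      rw [LinearMap.range_eq_top.mpr hsurj, finrank_top, hV] at hr
      have h1 : finrank 𝔽 𝔽 = 1 := finrank_self 𝔽
      show finrank 𝔽 ↥(LinearMap.ker (ψ.comp W.mkQ)) + 1 = n
      omega
    have htrans' : Transversal A (LinearMap.ker (ψ.comp W.mkQ)) := by
      intro e
      refine codim_one_inf ?_ ?_
      · rw [hV]; exact hcodim'
      · intro hle
        exact hφa e (LinearMap.mem_ker.mp (hle (haA e)))
    have hlow : ∑ e, k e ≤ finrank 𝔽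
        ↥(⨆ e ∈ (Finset.univ : Finset ι), (A e ⊓ LinearMap.ker (ψ.comp W.mkQ))) := by
      rw [← hWrank]
      apply Submodule.finrank_mono
      refine le_trans (le_of_eq hWdef) (Submodule.span_le.mpr ?_)
      intro x hx
      have hxs : x ∈ s := Finset.mem_coe.mp hx
      have hxW : x ∈ W := Submodule.subset_span hx
      have hxm : x ∈ A (g x) ⊓ LinearMap.ker (ψ.comp W.mkQ) := ⟨hmem x hxs, hWker hxW⟩
      exact (le_biSup' (fun e => A e ⊓ LinearMap.ker (ψ.comp W.mkQ))
        (Finset.mem_univ (g x))) hxm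
    have hupper := hreg Finset.univ (LinearMap.ker (ψ.comp W.mkQ)) hcodim' htrans'
    have hmain : finrank 𝔽 ↥(⨆ e ∈ (Finset.univ : Finset ι), (A e ⊓ H)) = ∑ e, k e :=
      le_antisymm hwd (le_trans hlow hupper)
    have hiSup : (⨆ e : ι, (A e ⊓ H)) = ⨆ e ∈ (Finset.univ : Finset ι), (A e ⊓ H) := by
      simp
    have hsetmem : ((∑ e, k e : ℕ) : ℤ) ∈ {s : ℤ | ∃ Q : Finset (Finset ι),
        IsPartitionOf Q Finset.univ ∧
        s = ∑ S ∈ Q, ((finrank 𝔽 ↥(⨆ e ∈ S, A e) : ℤ) - 1)} := by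
      refine ⟨P, hPart, ?_⟩
      have hterm : ∀ S ∈ P, ((finrank 𝔽 ↥(⨆ e ∈ S, A e) : ℤ) - 1)
          = ((∑ e ∈ S, k e : ℕ) : ℤ) := by
        intro S hS
        obtain ⟨aa, -, rfl⟩ := Finset.mem_image.mp (show S ∈ Finset.univ.image Usets from hS)
        have hteq := (hUkey aa).1.2
        simp only [hfdef] at hteq
        rw [← hteq]
        push_cast
        ring
      rw [Finset.sum_congr rfl hterm, ← Nat.cast_sum, hsum_part P hPart k]
    have hbound : ∀ z ∈ {s : ℤ | ∃ Q : Finset (Finset ι),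
        IsPartitionOf Q Finset.univ ∧
        s = ∑ S ∈ Q, ((finrank 𝔽 ↥(⨆ e ∈ S, A e) : ℤ) - 1)},
        ((∑ e, k e : ℕ) : ℤ) ≤ z := by
      rintro z ⟨Q, hQ, rfl⟩
      have hterm : ∀ S ∈ Q, ((∑ e ∈ S, k e : ℕ) : ℤ)
          ≤ (finrank 𝔽 ↥(⨆ e ∈ S, A e) : ℤ) - 1 := by
        intro S hS
        have h1 := hkF S (hQ.1 S hS)
        simp only [hfdef] at h1
        have h2 : ((∑ e ∈ S, k e : ℕ) : ℤ) + 1 ≤ (finrank 𝔽 ↥(⨆ e ∈ S, A e) : ℤ) := by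
          exact_mod_cast h1
        omega
      calc ((∑ e, k e : ℕ) : ℤ) = ∑ S ∈ Q, ((∑ e ∈ S, k e : ℕ) : ℤ) := by
            rw [← hsum_part Q hQ k, Nat.cast_sum]
        _ ≤ _ := Finset.sum_le_sum hterm
    have hInf : sInf {s : ℤ | ∃ Q : Finset (Finset ι),
        IsPartitionOf Q Finset.univ ∧
        s = ∑ S ∈ Q, ((finrank 𝔽 ↥(⨆ e ∈ S, A e) : ℤ) - 1)}
        = ((∑ e, k e : ℕ) : ℤ) :=
      le_antisymm (csInf_le ⟨_, hbound⟩ hsetmem) (le_csInf ⟨_, hsetmem⟩ hbound)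
    rw [hiSup, hmain, hInf]
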